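/- Let P = (1/3)·P₁ + (2/3)·P₂ where P₁ is uniform on [0,1] and P₂ is uniform on [1,2]. Then the optimal set of two-means for P coincides with the optimal set of two-means for the uniform distribution on [0,2]; both equal {1/2, 3/2}. -/

import Mathlib

open MeasureTheory Set

noncomputable def unif (a b : ℝ) : Measure ℝ :=
  (ENNReal.ofReal (b - a))⁻¹ • (volume.restrict (Icc a b))

noncomputable def mix (p : ℝ) (P₁ P₂ : Measure ℝ) : Measure ℝ :=
  ENNReal.ofReal p • P₁ + ENNReal.ofReal (1 - p) • P₂

noncomputable def distortion (P : Measure ℝ) (γ : Finset ℝ) : ℝ :=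
  ∫ x, sInf ((fun c => (x - c) ^ 2) '' (γ : Set ℝ)) ∂P

noncomputable def quantErr (P : Measure ℝ) (n : ℕ) : ℝ :=
  sInf { v | ∃ γ : Finset ℝ, γ.Nonempty ∧ γ.card ≤ n ∧ v = distortion P γ }

def IsOptimal (P : Measure ℝ) (n : ℕ) (γ : Finset ℝ) : Prop :=
  γ.Nonempty ∧ γ.card ≤ n ∧ distortion P γ = quantErr P n

/-! ### Algebraic lemmas -/

lemma baby_uni {t w : ℝ} (ht0 : 0 ≤ t) (ht2 : t ≤ 2) :
    0 ≤ t^2 + 2*w^2 - w*t^2 ∧ (t^2 + 2*w^2 - w*t^2 = 0 → t = 0 ∧ w = 0) := by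
  rcases le_or_gt w 0 with hw | hw
  · have h1 : 0 ≤ (-w) * t^2 := mul_nonneg (neg_nonneg.mpr hw) (sq_nonneg t)
    refine ⟨by nlinarith [sq_nonneg t, sq_nonneg w], fun h => ?_⟩
    have hw0 : w = 0 := by nlinarith [sq_nonneg t, sq_nonneg w]
    subst hw0
    exact ⟨by nlinarith [sq_nonneg t], rfl⟩
  · have h1 : 0 ≤ w * (t * (2 - t)) := mul_nonneg hw.le (mul_nonneg ht0 (by linarith))
    refine ⟨by nlinarith [sq_nonneg (t - w), sq_nonneg w], fun h => ?_⟩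
    have hw0 : w = 0 := by nlinarith [sq_nonneg (t - w), sq_nonneg w]
    subst hw0
    exact ⟨by nlinarith [sq_nonneg t], rfl⟩

lemma baby_mid {t w : ℝ} (ht0 : 0 ≤ t) (ht2 : t ≤ 2) :
    0 ≤ 2*(t-w)^2 + w^2 + w*t*(2-t) ∧
      (2*(t-w)^2 + w^2 + w*t*(2-t) = 0 → t = 0 ∧ w = 0) := by
  rcases le_or_gt w 0 with hw | hw
  · have h1 : 0 ≤ (-w) * t^2 := mul_nonneg (neg_nonneg.mpr hw) (sq_nonneg t)
    refine ⟨by nlinarith [sq_nonneg (t - w), sq_nonneg t, sq_nonneg w], fun h => ?_⟩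
    have hw0 : w = 0 := by nlinarith [sq_nonneg (t-w), sq_nonneg w]
    subst hw0
    exact ⟨by nlinarith [sq_nonneg t], rfl⟩
  · have h1 : 0 ≤ w * (t * (2 - t)) := mul_nonneg hw.le (mul_nonneg ht0 (by linarith))
    refine ⟨by nlinarith [sq_nonneg (t - w), sq_nonneg w], fun h => ?_⟩
    have hw0 : w = 0 := by nlinarith [sq_nonneg (t - w), sq_nonneg w]
    subst hw0
    exact ⟨by nlinarith [sq_nonneg t], rfl⟩

lemma baby_hi {t w : ℝ} (ht0 : 0 ≤ t) (ht2 : t ≤ 2) :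
    0 ≤ t^2 + 2*t*w + 3*w^2 - 2*w*t^2 ∧
      (t^2 + 2*t*w + 3*w^2 - 2*w*t^2 = 0 → t = 0 ∧ w = 0) := by
  rcases le_or_gt w 0 with hw | hw
  · have h1 : 0 ≤ (-w) * t^2 := mul_nonneg (neg_nonneg.mpr hw) (sq_nonneg t)
    refine ⟨by nlinarith [sq_nonneg (t + w), sq_nonneg w, sq_nonneg t], fun h => ?_⟩
    have hw0 : w = 0 := by nlinarith [sq_nonneg (t + w), sq_nonneg w, sq_nonneg t]
    subst hw0
    exact ⟨by nlinarith [sq_nonneg t], rfl⟩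
  · have h1 : 0 ≤ w * (t * (2 - t)) := mul_nonneg hw.le (mul_nonneg ht0 (by linarith))
    refine ⟨by nlinarith [sq_nonneg (t - w), sq_nonneg w], fun h => ?_⟩
    have hw0 : w = 0 := by nlinarith [sq_nonneg (t - w), sq_nonneg w]
    subst hw0
    exact ⟨by nlinarith [sq_nonneg t], rfl⟩

/-! ### Interval integral computations -/

lemma int_sq (c p q : ℝ) : ∫ x in p..q, (x-c)^2 = ((q-c)^3-(p-c)^3)/3 := by
  rw [intervalIntegral.integral_comp_sub_right (fun x => x^2) c, integral_pow]
  ring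

lemma cont_min (a b : ℝ) : Continuous (fun x : ℝ => min ((x-a)^2) ((x-b)^2)) := by fun_prop

lemma int_min_left {a b : ℝ} (p q : ℝ) (hab : a ≤ b) (hpq : p ≤ q) (h : q ≤ (a+b)/2) :
    ∫ x in p..q, min ((x-a)^2) ((x-b)^2) = ((q-a)^3-(p-a)^3)/3 := by
  rw [← int_sq a p q]
  apply intervalIntegral.integral_congr
  intro x hx
  rw [Set.uIcc_of_le hpq] at hx
  exact min_eq_left (by nlinarith [hx.1, hx.2])

lemma int_min_right {a b : ℝ} (p q : ℝ) (hab : a ≤ b) (hpq : p ≤ q) (h : (a+b)/2 ≤ p) :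
    ∫ x in p..q, min ((x-a)^2) ((x-b)^2) = ((q-b)^3-(p-b)^3)/3 := by
  rw [← int_sq b p q]
  apply intervalIntegral.integral_congr
  intro x hx
  rw [Set.uIcc_of_le hpq] at hx
  exact min_eq_right (by nlinarith [hx.1, hx.2])

lemma int_min_split {a b : ℝ} (p q r : ℝ) :
    (∫ x in p..r, min ((x-a)^2) ((x-b)^2))
      = (∫ x in p..q, min ((x-a)^2) ((x-b)^2)) + ∫ x in q..r, min ((x-a)^2) ((x-b)^2) :=
  (intervalIntegral.integral_add_adjacent_intervals
    ((cont_min a b).intervalIntegrable p q) ((cont_min a b).intervalIntegrable q r)).symm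

/-! ### Integrals against the two measures -/

lemma integral_mix (f : ℝ → ℝ) (hf : Continuous f) :
    ∫ x, f x ∂(mix (1/3) (unif 0 1) (unif 1 2))
      = (1/3) * (∫ x in (0:ℝ)..1, f x) + (2/3) * (∫ x in (1:ℝ)..2, f x) := by
  have h1 : unif 0 1 = volume.restrict (Icc (0:ℝ) 1) := by
    simp [unif]
  have h2 : unif 1 2 = volume.restrict (Icc (1:ℝ) 2) := by
    norm_num [unif]
  have i1 : Integrable f (volume.restrict (Icc (0:ℝ) 1)) := hf.integrableOn_Icc
  have i2 : Integrable f (volume.restrict (Icc (1:ℝ) 2)) := hf.integrableOn_Icc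
  rw [mix, h1, h2, integral_add_measure (i1.smul_measure (by simp)) (i2.smul_measure (by simp)),
    MeasureTheory.integral_smul_measure, MeasureTheory.integral_smul_measure]
  rw [integral_Icc_eq_integral_Ioc, integral_Icc_eq_integral_Ioc,
    ← intervalIntegral.integral_of_le (by norm_num : (0:ℝ) ≤ 1),
    ← intervalIntegral.integral_of_le (by norm_num : (1:ℝ) ≤ 2)]
  norm_num [ENNReal.toReal_ofReal]

lemma integral_unif02 (f : ℝ → ℝ) (hf : Continuous f) :
    ∫ x, f x ∂(unif 0 2)
      = (1/2) * ((∫ x in (0:ℝ)..1, f x) + (∫ x in (1:ℝ)..2, f x)) := by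
  have : ∫ x, f x ∂(unif 0 2) = (2:ℝ)⁻¹ * ∫ x in (0:ℝ)..2, f x := by
    rw [unif, MeasureTheory.integral_smul_measure, integral_Icc_eq_integral_Ioc,
      ← intervalIntegral.integral_of_le (by norm_num : (0:ℝ) ≤ 2)]
    norm_num [ENNReal.toReal_inv, ENNReal.toReal_ofReal]
  rw [this, ← intervalIntegral.integral_add_adjacent_intervals
    (hf.intervalIntegrable 0 1) (hf.intervalIntegrable 1 2)]
  ring

/-! ### Distortion formulas -/

lemma distortion_pair (P : Measure ℝ) (a b : ℝ) :
    distortion P {a, b} = ∫ x, min ((x-a)^2) ((x-b)^2) ∂P := by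
  unfold distortion
  congr 1
  funext x
  rw [Finset.coe_insert, Finset.coe_singleton, Set.image_pair, csInf_pair]

lemma distortion_single (P : Measure ℝ) (c : ℝ) :
    distortion P {c} = ∫ x, (x - c)^2 ∂P := by
  unfold distortion
  congr 1
  funext x
  rw [Finset.coe_singleton, Set.image_singleton, csInf_singleton]

lemma distortion_mix_pair (a b : ℝ) :
    distortion (mix (1/3) (unif 0 1) (unif 1 2)) {a, b}
      = (1/3) * (∫ x in (0:ℝ)..1, min ((x-a)^2) ((x-b)^2))
        + (2/3) * (∫ x in (1:ℝ)..2, min ((x-a)^2) ((x-b)^2)) := by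
  rw [distortion_pair]
  exact integral_mix _ (cont_min a b)

lemma distortion_uni_pair (a b : ℝ) :
    distortion (unif 0 2) {a, b}
      = (1/2) * ((∫ x in (0:ℝ)..1, min ((x-a)^2) ((x-b)^2))
        + (∫ x in (1:ℝ)..2, min ((x-a)^2) ((x-b)^2))) := by
  rw [distortion_pair]
  exact integral_unif02 _ (cont_min a b)

lemma distortion_mix_single (c : ℝ) :
    distortion (mix (1/3) (unif 0 1) (unif 1 2)) {c}
      = (1/3) * (((1-c)^3-(0-c)^3)/3) + (2/3) * (((2-c)^3-(1-c)^3)/3) := by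
  rw [distortion_single, integral_mix _ (by fun_prop), int_sq, int_sq]

lemma distortion_uni_single (c : ℝ) :
    distortion (unif 0 2) {c}
      = (1/2) * ((((1-c)^3-(0-c)^3)/3) + (((2-c)^3-(1-c)^3)/3)) := by
  rw [distortion_single, integral_unif02 _ (by fun_prop), int_sq, int_sq]

/-! ### The two-point lower bounds -/

lemma pair_mix {a b : ℝ} (hab : a ≤ b) :
    1/12 ≤ distortion (mix (1/3) (unif 0 1) (unif 1 2)) {a, b} ∧
    (distortion (mix (1/3) (unif 0 1) (unif 1 2)) {a, b} = 1/12 → a = 1/2 ∧ b = 3/2) := by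
  rw [distortion_mix_pair]
  rcases le_or_gt ((a+b)/2) 0 with hm | hm
  · rw [int_min_right 0 1 hab (by norm_num) hm,
      int_min_right 1 2 hab (by norm_num) (by linarith)]
    exact ⟨by nlinarith [sq_nonneg (b - 7/6)],
      fun h => absurd h (by nlinarith [sq_nonneg (b - 7/6)])⟩
  · rcases le_or_gt 2 ((a+b)/2) with hm2 | hm2
    · rw [int_min_left 0 1 hab (by norm_num) (by linarith),
        int_min_left 1 2 hab (by norm_num) hm2]
      exact ⟨by nlinarith [sq_nonneg (a - 7/6)],
        fun h => absurd h (by nlinarith [sq_nonneg (a - 7/6)])⟩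
    · rcases le_or_gt ((a+b)/2) 1 with hm1 | hm1
      · rw [int_min_split 0 ((a+b)/2) 1,
          int_min_left 0 ((a+b)/2) hab (by linarith) (by linarith),
          int_min_right ((a+b)/2) 1 hab (by linarith) (by linarith),
          int_min_right 1 2 hab (by norm_num) (by linarith)]
        obtain ⟨h1, h2⟩ := baby_mid (t := 2-(a+b)) (w := b-a-1) (by linarith) (by linarith)
        refine ⟨by nlinarith [h1], fun h => ?_⟩
        obtain ⟨ht, hw⟩ := h2 (by linear_combination 12 * h)
        exact ⟨by linarith, by linarith⟩
      · rw [int_min_left 0 1 hab (by norm_num) (by linarith),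
          int_min_split 1 ((a+b)/2) 2,
          int_min_left 1 ((a+b)/2) hab (by linarith) (by linarith),
          int_min_right ((a+b)/2) 2 hab (by linarith) (by linarith)]
        obtain ⟨h1, h2⟩ := baby_hi (t := (a+b)-2) (w := b-a-1) (by linarith) (by linarith)
        refine ⟨by nlinarith [h1], fun h => ?_⟩
        obtain ⟨ht, hw⟩ := h2 (by linear_combination 12 * h)
        exact ⟨by linarith, by linarith⟩

lemma pair_uni {a b : ℝ} (hab : a ≤ b) :
    1/12 ≤ distortion (unif 0 2) {a, b} ∧
    (distortion (unif 0 2) {a, b} = 1/12 → a = 1/2 ∧ b = 3/2) := by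
  rw [distortion_uni_pair]
  rcases le_or_gt ((a+b)/2) 0 with hm | hm
  · rw [int_min_right 0 1 hab (by norm_num) hm,
      int_min_right 1 2 hab (by norm_num) (by linarith)]
    exact ⟨by nlinarith [sq_nonneg (b - 1)],
      fun h => absurd h (by nlinarith [sq_nonneg (b - 1)])⟩
  · rcases le_or_gt 2 ((a+b)/2) with hm2 | hm2
    · rw [int_min_left 0 1 hab (by norm_num) (by linarith),
        int_min_left 1 2 hab (by norm_num) hm2]
      exact ⟨by nlinarith [sq_nonneg (a - 1)],
        fun h => absurd h (by nlinarith [sq_nonneg (a - 1)])⟩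
    · rcases le_or_gt ((a+b)/2) 1 with hm1 | hm1
      · rw [int_min_split 0 ((a+b)/2) 1,
          int_min_left 0 ((a+b)/2) hab (by linarith) (by linarith),
          int_min_right ((a+b)/2) 1 hab (by linarith) (by linarith),
          int_min_right 1 2 hab (by norm_num) (by linarith)]
        obtain ⟨h1, h2⟩ := baby_uni (t := 2-(a+b)) (w := b-a-1) (by linarith) (by linarith)
        refine ⟨by nlinarith [h1], fun h => ?_⟩
        obtain ⟨ht, hw⟩ := h2 (by linear_combination 8 * h)
        exact ⟨by linarith, by linarith⟩
      · rw [int_min_left 0 1 hab (by norm_num) (by linarith),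
          int_min_split 1 ((a+b)/2) 2,
          int_min_left 1 ((a+b)/2) hab (by linarith) (by linarith),
          int_min_right ((a+b)/2) 2 hab (by linarith) (by linarith)]
        obtain ⟨h1, h2⟩ := baby_uni (t := (a+b)-2) (w := b-a-1) (by linarith) (by linarith)
        refine ⟨by nlinarith [h1], fun h => ?_⟩
        obtain ⟨ht, hw⟩ := h2 (by linear_combination 8 * h)
        exact ⟨by linarith, by linarith⟩

/-! ### Classification of small finsets -/

lemma classify (γ : Finset ℝ) (h1 : γ.Nonempty) (h2 : γ.card ≤ 2) :
    (∃ a, γ = {a}) ∨ ∃ a b, a < b ∧ γ = ({a, b} : Finset ℝ) := by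
  have hc : γ.card = 1 ∨ γ.card = 2 := by
    have := Finset.card_pos.mpr h1; omega
  rcases hc with h | h
  · exact Or.inl (Finset.card_eq_one.mp h)
  · obtain ⟨a, b, hne, rfl⟩ := Finset.card_eq_two.mp h
    rcases hne.lt_or_gt with hlt | hlt
    · exact Or.inr ⟨a, b, hlt, rfl⟩
    · exact Or.inr ⟨b, a, hlt, by rw [Finset.pair_comm]⟩

/-! ### Optimal values -/

lemma opt_val_mix : distortion (mix (1/3) (unif 0 1) (unif 1 2)) {1/2, 3/2} = 1/12 := by
  rw [distortion_mix_pair,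
    int_min_left 0 1 (by norm_num) (by norm_num) (by norm_num),
    int_min_right 1 2 (by norm_num) (by norm_num) (by norm_num)]
  norm_num

lemma opt_val_uni : distortion (unif 0 2) {1/2, 3/2} = 1/12 := by
  rw [distortion_uni_pair,
    int_min_left 0 1 (by norm_num) (by norm_num) (by norm_num),
    int_min_right 1 2 (by norm_num) (by norm_num) (by norm_num)]
  norm_num

lemma lb_mix : ∀ v ∈ { v | ∃ γ : Finset ℝ, γ.Nonempty ∧ γ.card ≤ 2 ∧
    v = distortion (mix (1/3) (unif 0 1) (unif 1 2)) γ }, 1/12 ≤ v := by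
  rintro v ⟨γ, hne, hcard, rfl⟩
  rcases classify γ hne hcard with ⟨c, rfl⟩ | ⟨a, b, hlt, rfl⟩
  · rw [distortion_mix_single]
    nlinarith [sq_nonneg (c - 7/6)]
  · exact (pair_mix hlt.le).1

lemma lb_uni : ∀ v ∈ { v | ∃ γ : Finset ℝ, γ.Nonempty ∧ γ.card ≤ 2 ∧
    v = distortion (unif 0 2) γ }, 1/12 ≤ v := by
  rintro v ⟨γ, hne, hcard, rfl⟩
  rcases classify γ hne hcard with ⟨c, rfl⟩ | ⟨a, b, hlt, rfl⟩
  · rw [distortion_uni_single]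
    nlinarith [sq_nonneg (c - 1)]
  · exact (pair_uni hlt.le).1

lemma mem_opt_mix : (1/12 : ℝ) ∈ { v | ∃ γ : Finset ℝ, γ.Nonempty ∧ γ.card ≤ 2 ∧
    v = distortion (mix (1/3) (unif 0 1) (unif 1 2)) γ } :=
  ⟨{1/2, 3/2}, ⟨1/2, by simp⟩, (Finset.card_insert_le _ _).trans (by norm_num),
    opt_val_mix.symm⟩

lemma mem_opt_uni : (1/12 : ℝ) ∈ { v | ∃ γ : Finset ℝ, γ.Nonempty ∧ γ.card ≤ 2 ∧
    v = distortion (unif 0 2) γ } :=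
  ⟨{1/2, 3/2}, ⟨1/2, by simp⟩, (Finset.card_insert_le _ _).trans (by norm_num),
    opt_val_uni.symm⟩

lemma quantErr_mix : quantErr (mix (1/3) (unif 0 1) (unif 1 2)) 2 = 1/12 :=
  le_antisymm (csInf_le ⟨1/12, lb_mix⟩ mem_opt_mix) (le_csInf ⟨1/12, mem_opt_mix⟩ lb_mix)

lemma quantErr_uni : quantErr (unif 0 2) 2 = 1/12 :=
  le_antisymm (csInf_le ⟨1/12, lb_uni⟩ mem_opt_uni) (le_csInf ⟨1/12, mem_opt_uni⟩ lb_uni)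

theorem stmt5 :
    ∀ γ : Finset ℝ,
      (IsOptimal (mix (1/3) (unif 0 1) (unif 1 2)) 2 γ ↔ γ = {1/2, 3/2}) ∧
      (IsOptimal (unif 0 2) 2 γ ↔ γ = {1/2, 3/2}) := by
  intro γ
  constructor
  · constructor
    · rintro ⟨hne, hcard, heq⟩
      rw [quantErr_mix] at heq
      rcases classify γ hne hcard with ⟨c, rfl⟩ | ⟨a, b, hlt, rfl⟩
      · rw [distortion_mix_single] at heq
        exact absurd heq (by nlinarith [sq_nonneg (c - 7/6)])
      · obtain ⟨ha, hb⟩ := (pair_mix hlt.le).2 heq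
        rw [ha, hb]
    · rintro rfl
      exact ⟨⟨1/2, by simp⟩, (Finset.card_insert_le _ _).trans (by norm_num),
        by rw [opt_val_mix, quantErr_mix]⟩
  · constructor
    · rintro ⟨hne, hcard, heq⟩
      rw [quantErr_uni] at heq
      rcases classify γ hne hcard with ⟨c, rfl⟩ | ⟨a, b, hlt, rfl⟩
      · rw [distortion_uni_single] at heq
        exact absurd heq (by nlinarith [sq_nonneg (c - 1)])
      · obtain ⟨ha, hb⟩ := (pair_uni hlt.le).2 heq
        rw [ha, hb]
    · rintro rfl
      exact ⟨⟨1/2, by simp⟩, (Finset.card_insert_le _ _).trans (by norm_num),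
        by rw [opt_val_uni, quantErr_uni]⟩
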